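/- There exists an absolute constant C > 0 such that for all real numbers t ≥ 1 and k ≥ 2, ∫_{1}^{∞} √r · e^{−πr} / (|r − t| + k)² dr ≤ C · ( 1/(k+t)² + √t · e^{−πt} / k² ). -/

import Mathlib

open MeasureTheory

lemma stmt17_pointwise (t k r : ℝ) (ht : 1 ≤ t) (hk : 2 ≤ k) (hr : 1 ≤ r) :
    Real.sqrt r * Real.exp (-Real.pi * r) / (|r - t| + k) ^ 2 ≤
      500 / (k + t) ^ 2 * Real.exp (-r) := by
  have hk0 : (0:ℝ) < k := by linarith
  have hkt : (0:ℝ) < k + t := by linarith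
  have habs : (0:ℝ) ≤ |r - t| := abs_nonneg _
  have hN : Real.sqrt r * Real.exp (-Real.pi * r) ≤ Real.exp (-2 * r) := by
    have h1 : Real.sqrt r ≤ r := by
      nlinarith [Real.sq_sqrt (by linarith : (0:ℝ) ≤ r), Real.sqrt_nonneg r,
        sq_nonneg (Real.sqrt r - 1)]
    have h2 : r ≤ Real.exp r := by linarith [Real.add_one_le_exp r]
    calc Real.sqrt r * Real.exp (-Real.pi * r) ≤ Real.exp r * Real.exp (-Real.pi * r) := by
          exact mul_le_mul_of_nonneg_right (h1.trans h2) (Real.exp_nonneg _)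
      _ = Real.exp (r + -Real.pi * r) := (Real.exp_add _ _).symm
      _ ≤ Real.exp (-2 * r) := by
          apply Real.exp_le_exp.mpr
          nlinarith [Real.pi_gt_three]
  have hexp2r : Real.exp (-2 * r) ≤ Real.exp (-r) := Real.exp_le_exp.mpr (by linarith)
  rcases le_or_gt r (t / 2) with h | h
  · -- far from t : denominator at least ((k+t)/2)^2
    have habs' : |r - t| = t - r := by
      rw [abs_of_nonpos (by linarith : r - t ≤ 0)]; ring
    have hD : (k + t) ^ 2 / 4 ≤ (|r - t| + k) ^ 2 := by
      rw [habs']; nlinarith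
    calc Real.sqrt r * Real.exp (-Real.pi * r) / (|r - t| + k) ^ 2
        ≤ Real.exp (-2 * r) / ((k + t) ^ 2 / 4) := by
          apply div_le_div₀ (Real.exp_nonneg _) hN (by positivity) hD
      _ ≤ Real.exp (-r) / ((k + t) ^ 2 / 4) := by gcongr
      _ = 4 / (k + t) ^ 2 * Real.exp (-r) := by
          field_simp
      _ ≤ 500 / (k + t) ^ 2 * Real.exp (-r) := by
          gcongr; norm_num
  · -- close to t : denominator at least k^2, and exp(-r) ≤ exp(-t/2) gain
    have hD : k ^ 2 ≤ (|r - t| + k) ^ 2 := by nlinarith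
    have hexps : Real.exp (-r) ≤ Real.exp (-(t/2)) := Real.exp_le_exp.mpr (by linarith)
    have hquad : (1 + t/2) ^ 2 ≤ 4 * Real.exp (t/2) := by
      have h1 := Real.add_one_le_exp (t/4)
      have h2 : Real.exp (t/4) * Real.exp (t/4) = Real.exp (t/2) := by
        rw [← Real.exp_add]; ring_nf
      nlinarith [Real.exp_nonneg (t/4)]
    have hkey : Real.exp (-(t/2)) / k ^ 2 ≤ 500 / (k + t) ^ 2 := by
      rw [div_le_div_iff₀ (by positivity) (by positivity)]
      have hkt2 : (k + t) ^ 2 ≤ k ^ 2 * (1 + t/2) ^ 2 := by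
        nlinarith [mul_nonneg (mul_nonneg hk0.le (by linarith : (0:ℝ) ≤ t))
            (by linarith : (0:ℝ) ≤ k - 2),
          mul_nonneg (mul_nonneg (sq_nonneg t) (by linarith : (0:ℝ) ≤ k - 2))
            (by linarith : (0:ℝ) ≤ k + 2)]
      have hee : Real.exp (-(t/2)) * Real.exp (t/2) = 1 := by
        rw [← Real.exp_add]; ring_nf; exact Real.exp_zero
      have he0 : (0:ℝ) < Real.exp (-(t/2)) := Real.exp_pos _
      nlinarith [mul_le_mul_of_nonneg_left hkt2 he0.le,
        mul_le_mul_of_nonneg_left hquad he0.le, sq_nonneg k]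
    calc Real.sqrt r * Real.exp (-Real.pi * r) / (|r - t| + k) ^ 2
        ≤ Real.exp (-2 * r) / k ^ 2 := by
          apply div_le_div₀ (Real.exp_nonneg _) hN (by positivity) hD
      _ = Real.exp (-r) * Real.exp (-r) / k ^ 2 := by
          rw [← Real.exp_add]; ring_nf
      _ ≤ Real.exp (-(t/2)) * Real.exp (-r) / k ^ 2 := by
          gcongr
      _ = Real.exp (-(t/2)) / k ^ 2 * Real.exp (-r) := by ring
      _ ≤ 500 / (k + t) ^ 2 * Real.exp (-r) := by
          exact mul_le_mul_of_nonneg_right hkey (Real.exp_nonneg _)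

theorem stmt17 :
    ∃ C > (0 : ℝ), ∀ t k : ℝ, 1 ≤ t → 2 ≤ k →
      (∫ r in Set.Ici (1 : ℝ), Real.sqrt r * Real.exp (-Real.pi * r) / (|r - t| + k) ^ 2) ≤
        C * (1 / (k + t) ^ 2 + Real.sqrt t * Real.exp (-Real.pi * t) / k ^ 2) := by
  refine ⟨500, by norm_num, fun t k ht hk => ?_⟩
  have hk0 : (0:ℝ) < k := by linarith
  have hkt : (0:ℝ) < k + t := by linarith
  -- integrability of the dominating function
  have hgint : IntegrableOn (fun r : ℝ => 500 / (k + t) ^ 2 * Real.exp (-r))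
      (Set.Ici (1:ℝ)) := by
    have h : IntegrableOn (fun r : ℝ => Real.exp (-r)) (Set.Ici (1:ℝ)) := by
      rw [integrableOn_Ici_iff_integrableOn_Ioi]
      simpa using exp_neg_integrableOn_Ioi (1:ℝ) (by norm_num : (0:ℝ) < 1)
    exact h.const_mul _
  -- continuity hence measurability of the integrand
  have hcont : Continuous (fun r : ℝ =>
      Real.sqrt r * Real.exp (-Real.pi * r) / (|r - t| + k) ^ 2) := by
    apply Continuous.div
    · exact (Real.continuous_sqrt).mul (Real.continuous_exp.comp (by continuity))
    · continuity
    · intro x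
      have : (0:ℝ) < |x - t| + k := by positivity
      positivity
  -- integrability of the integrand via domination
  have hfint : IntegrableOn (fun r : ℝ =>
      Real.sqrt r * Real.exp (-Real.pi * r) / (|r - t| + k) ^ 2) (Set.Ici (1:ℝ)) := by
    apply Integrable.mono' hgint (hcont.aestronglyMeasurable.restrict)
    filter_upwards [ae_restrict_mem measurableSet_Ici] with r hr
    have hr1 : (1:ℝ) ≤ r := hr
    have h0 : (0:ℝ) ≤ Real.sqrt r * Real.exp (-Real.pi * r) / (|r - t| + k) ^ 2 := by
      have : (0:ℝ) < |r - t| + k := by positivity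
      positivity
    rw [Real.norm_of_nonneg h0]
    exact stmt17_pointwise t k r ht hk hr1
  calc (∫ r in Set.Ici (1 : ℝ), Real.sqrt r * Real.exp (-Real.pi * r) / (|r - t| + k) ^ 2)
      ≤ ∫ r in Set.Ici (1 : ℝ), 500 / (k + t) ^ 2 * Real.exp (-r) := by
        apply setIntegral_mono_on hfint hgint measurableSet_Ici
        intro r hr
        exact stmt17_pointwise t k r ht hk hr
    _ = 500 / (k + t) ^ 2 * ∫ r in Set.Ici (1 : ℝ), Real.exp (-r) := by
        rw [integral_const_mul]
    _ = 500 / (k + t) ^ 2 * Real.exp (-1) := by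
        rw [integral_Ici_eq_integral_Ioi, integral_exp_neg_Ioi]
    _ ≤ 500 / (k + t) ^ 2 * 1 := by
        have he : Real.exp (-1) ≤ 1 := Real.exp_le_one_iff.mpr (by norm_num)
        have h0 : (0:ℝ) ≤ 500 / (k + t) ^ 2 := by positivity
        exact mul_le_mul_of_nonneg_left he h0
    _ ≤ 500 * (1 / (k + t) ^ 2 + Real.sqrt t * Real.exp (-Real.pi * t) / k ^ 2) := by
        have h1 : (0:ℝ) ≤ Real.sqrt t * Real.exp (-Real.pi * t) / k ^ 2 := by positivity
        rw [mul_one, div_eq_mul_one_div]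
        nlinarith
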